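/- The covered-subterm relation commutes with rewriting: if u ▷̂ v (v is a strict covered-subterm of u) and v → w by a rewrite step of a rewrite system whose rules are headed by function symbols, then there exists v' such that u → v' and v' ▷̂ w. -/

import Mathlib

set_option linter.unusedVariables false

/-- IDTS metaterms: variables, abstraction, function symbols (fixed arity via list),
and metavariables applied to arguments. -/
inductive Tm : Type where
  | var  : ℕ → Tm
  | lam  : ℕ → Tm → Tm
  | fn   : ℕ → List Tm → Tm
  | mvar : ℕ → List Tm → Tm

namespace Tm

/-- Free variables. -/
def fv : Tm → Set ℕ
  | var x => {x}
  | lam x u => fv u \ {x}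
  | fn _ us => us.attach.foldr (fun ⟨u, hu⟩ s => fv u ∪ s) ∅
  | mvar _ us => us.attach.foldr (fun ⟨u, hu⟩ s => fv u ∪ s) ∅
decreasing_by
  all_goals try have := List.sizeOf_lt_of_mem hu
  all_goals simp
  all_goals omega

/-- Substitution of terms for free variables (the paper works modulo α-conversion,
assuming bound variables distinct from free variables of the codomain). -/
def subst (θ : ℕ → Tm) : Tm → Tm
  | var x => θ x
  | lam x u => lam x (subst (Function.update θ x (var x)) u)
  | fn f us => fn f (us.attach.map fun ⟨u, hu⟩ => subst θ u)
  | mvar Z us => mvar Z (us.attach.map fun ⟨u, hu⟩ => subst θ u)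
decreasing_by
  all_goals try have := List.sizeOf_lt_of_mem hu
  all_goals simp
  all_goals omega

end Tm
namespace Tm

/-- An `n`-ary substitute `λ̲(x⃗).w` is coded as the pair `(x⃗, w)`;
an IDTS-valuation assigns a substitute to every metavariable. -/
def Val : Type := ℕ → List ℕ × Tm

/-- The substitution `{x⃗ → t⃗}` built from parallel lists. -/
def listSubst (xs : List ℕ) (ts : List Tm) (y : ℕ) : Tm :=
  if y ∈ xs then ts.getD (xs.idxOf y) (var y) else var y

/-- Application of an IDTS-valuation to a metaterm:
`Z(u⃗)σ = w{x⃗ → u⃗σ}` when `σ(Z) = λ̲(x⃗).w`. -/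
def vapp (σ : Val) : Tm → Tm
  | var x => var x
  | lam x u => lam x (vapp σ u)
  | fn f us => fn f (us.attach.map fun ⟨u, hu⟩ => vapp σ u)
  | mvar Z us => ((σ Z).2).subst (listSubst (σ Z).1 (us.attach.map fun ⟨u, hu⟩ => vapp σ u))
decreasing_by
  all_goals try have := List.sizeOf_lt_of_mem hu
  all_goals simp
  all_goals omega

/-- `FnReach t s`: `s` is a subterm of `t` reachable by passing only through
function-symbol nodes. -/
inductive FnReach : Tm → Tm → Prop
  | refl (t : Tm) : FnReach t t
  | step {f : ℕ} {us : List Tm} {t s : Tm} :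
      t ∈ us → FnReach t s → FnReach (fn f us) s

/-- `Covered u v` (i.e. `v û⊴ u`): `v` is a covered-subterm of `u`; it is obtained by
replacing, under a context made only of abstractions, a subterm of `u` by one of its
subterms reachable through function-symbol nodes only. -/
inductive Covered : Tm → Tm → Prop
  | base {t s : Tm} : FnReach t s → Covered t s
  | abs {x : ℕ} {t s : Tm} : Covered t s → Covered (lam x t) (lam x s)

/-- `u ▷̂ v`: `v` is a *strict* covered-subterm of `u`. -/
def StrictCovered (u v : Tm) : Prop := Covered u v ∧ u ≠ v

/-- Context closure of a root-step relation: the rewrite relation. -/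
inductive Rw (root : Tm → Tm → Prop) : Tm → Tm → Prop
  | root {u v} : root u v → Rw root u v
  | abs {x u v} : Rw root u v → Rw root (lam x u) (lam x v)
  | fnArg {f l₁ l₂ u v} : Rw root u v →
      Rw root (fn f (l₁ ++ u :: l₂)) (fn f (l₁ ++ v :: l₂))
  | mvarArg {Z l₁ l₂ u v} : Rw root u v →
      Rw root (mvar Z (l₁ ++ u :: l₂)) (mvar Z (l₁ ++ v :: l₂))

/-- Binary application via the application symbol `a`. -/
def appT (a : ℕ) (u v : Tm) : Tm := fn a [u, v]

/-- Iterated application `@(h, u₁, …, uₙ)`. -/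
def appSpine (a : ℕ) (h : Tm) (us : List Tm) : Tm := us.foldl (appT a) h

/-- Accessible subterms of `v` (Definition "Accessible subterms"), relative to a set `C`
of constructors, an application symbol `a` and a predicate `basic` singling out the
terms of basic type. -/
inductive IAcc (C : ℕ → Prop) (a : ℕ) (basic : Tm → Prop) (v : Tm) : Tm → Prop
  | refl : IAcc C a basic v v
  | abs {x u} : IAcc C a basic v (lam x u) → IAcc C a basic v u
  | constr {c us u} : C c → IAcc C a basic v (fn c us) → u ∈ us → IAcc C a basic v u
  | basicArg {f us u} : IAcc C a basic v (fn f us) → u ∈ us → basic u →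
      IAcc C a basic v u
  | appL {u x} : IAcc C a basic v (appT a u (var x)) → x ∉ fv u → x ∉ fv v →
      IAcc C a basic v u
  | appR {x us u} : IAcc C a basic v (appSpine a (var x) us) →
      (∀ w ∈ us, x ∉ fv w) → x ∉ fv v → u ∈ us → IAcc C a basic v u

end Tm

open Tm in
lemma fnReach_sizeOf_le {t s : Tm} (h : FnReach t s) : sizeOf s ≤ sizeOf t := by
  induction h with
  | refl => exact le_refl _
  | step hmem _ ih =>
      have := List.sizeOf_lt_of_mem hmem
      simp only [Tm.fn.sizeOf_spec]
      omega

open Tm in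
lemma fnReach_key (root : Tm → Tm → Prop) :
    ∀ t s s' : Tm, FnReach t s → t ≠ s → Rw root s s' →
      ∃ t', Rw root t t' ∧ FnReach t' s' ∧ sizeOf s' < sizeOf t' := by
  intro t s s' hreach
  induction hreach with
  | refl => intro hne; exact absurd rfl hne
  | @step f us m s hmem hr ih =>
      intro _ hrw
      by_cases hms : m = s
      · subst hms
        obtain ⟨l₁, l₂, hl⟩ := List.append_of_mem hmem
        subst hl
        refine ⟨fn f (l₁ ++ s' :: l₂), Rw.fnArg hrw,
          FnReach.step (by simp) (FnReach.refl _), ?_⟩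
        have : s' ∈ l₁ ++ s' :: l₂ := by simp
        have := List.sizeOf_lt_of_mem this
        simp only [Tm.fn.sizeOf_spec]
        omega
      · obtain ⟨t₁, ht₁, hre, hsz⟩ := ih hms hrw
        obtain ⟨l₁, l₂, hl⟩ := List.append_of_mem hmem
        subst hl
        refine ⟨fn f (l₁ ++ t₁ :: l₂), Rw.fnArg ht₁,
          FnReach.step (by simp) hre, ?_⟩
        have : t₁ ∈ l₁ ++ t₁ :: l₂ := by simp
        have := List.sizeOf_lt_of_mem this
        simp only [Tm.fn.sizeOf_spec]
        omega

open Tm in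
/-- the covered-subterm relation commutes with rewriting for rewrite
systems all of whose root steps are headed by function symbols: if `u ▷̂ v` and
`v → w`, then there is `v'` with `u → v'` and `v' ▷̂ w`. -/
theorem strictCovered_commutes_rw
    (root : Tm → Tm → Prop)
    (hroot : ∀ u v, root u v → ∃ f us, u = Tm.fn f us) :
    ∀ u v w : Tm, StrictCovered u v → Rw root v w →
      ∃ v', Rw root u v' ∧ StrictCovered v' w := by
  intro u v w hsc hrw
  obtain ⟨hcov, hne⟩ := hsc
  induction hcov generalizing w with
  | @base t s hr =>
      obtain ⟨t', ht', hre, hsz⟩ := fnReach_key root t s w hr hne hrw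
      exact ⟨t', ht', Covered.base hre, by intro h; subst h; omega⟩
  | @abs x t s hcov ih =>
      cases hrw with
      | root hr =>
          obtain ⟨f, us, h⟩ := hroot _ _ hr
          exact absurd h (by simp)
      | @abs _ _ w' hrw' =>
          have hne' : t ≠ s := by intro h; exact hne (by rw [h])
          obtain ⟨t₁, ht₁, hc₁, hne₁⟩ := ih w' hrw' hne'
          exact ⟨lam x t₁, Rw.abs ht₁, Covered.abs hc₁,
            by intro h; injection h with _ h; exact hne₁ h⟩
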